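/- If G is an m-joined graph, then G contains a path of length at least |V(G)| − 2m. -/
import Mathlib


open SimpleGraph

/-- `G` is `m`-joined: between any two disjoint vertex sets of size `m` there is an edge. -/
def IsJoined {V : Type*} (G : SimpleGraph V) (m : ℕ) : Prop :=
  ∀ A B : Finset V, Disjoint A B → A.card = m → B.card = m →
    ∃ a ∈ A, ∃ b ∈ B, G.Adj a b

section Aux

variable {V : Type} [Fintype V] [DecidableEq V] {G : SimpleGraph V} {m : ℕ}

/-- If `U` has `m` vertices and has no edge to `Ws` (disjoint from it), then `|Ws| < m`. -/
lemma IsJoined.small_W (hG : IsJoined G m) (hm : 1 ≤ m) (U Ws : Finset V) (hU : U.card = m)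
    (hd : Disjoint U Ws) (hno : ∀ a ∈ U, ∀ b ∈ Ws, ¬ G.Adj a b) : Ws.card < m := by
  by_contra h
  push_neg at h
  obtain ⟨B, hBW, hB⟩ := Finset.exists_subset_card_eq h
  obtain ⟨a, ha, b, hb, hab⟩ := hG U B (hd.mono_right hBW) hU hB
  exact hno a ha b (hBW hb) hab

/-- Size of the unexplored set. -/
lemma card_compl_eq {u v : V} (P : G.Walk v u) (hP : P.IsPath) (U : Finset V)
    (hdisj : ∀ x ∈ U, x ∉ P.support) :
    ((P.support.toFinset ∪ U)ᶜ).card + (P.length + 1) + U.card = Fintype.card V := by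
  have hnd : P.support.Nodup := hP.support_nodup
  have h1 : P.support.toFinset.card = P.length + 1 := by
    rw [List.toFinset_card_of_nodup hnd, Walk.length_support]
  have hd : Disjoint P.support.toFinset U := by
    rw [Finset.disjoint_right]
    intro x hxU hxS
    exact hdisj x hxU (List.mem_toFinset.mp hxS)
  have h2 : (P.support.toFinset ∪ U).card = P.length + 1 + U.card := by
    rw [Finset.card_union_of_disjoint hd, h1]
  have h3 := Finset.card_compl (P.support.toFinset ∪ U)
  have h4 : (P.support.toFinset ∪ U).card ≤ Fintype.card V :=
    le_trans (Finset.card_le_univ _) (le_of_eq (Finset.card_univ))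
  omega

/-- The DFS invariant lemma: given a path `P` and a finished set `U` with fewer than `m`
vertices, disjoint from `P`, such that there is no edge from `U` to the unexplored set,
we can find a long path. -/
lemma key (hG : IsJoined G m) (hm : 1 ≤ m) :
    ∀ μ : ℕ, ∀ (v u : V) (P : G.Walk v u), P.IsPath →
    ∀ U : Finset V, (∀ x ∈ U, x ∉ P.support) → U.card < m →
    (∀ a ∈ U, ∀ b : V, b ∉ P.support → b ∉ U → ¬ G.Adj a b) →
    2 * ((P.support.toFinset ∪ U)ᶜ).card + P.length ≤ μ →
    ∃ (u' v' : V) (P' : G.Walk u' v'), P'.IsPath ∧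
      (Fintype.card V : ℤ) - 2 * (m : ℤ) ≤ (P'.length : ℤ) := by
  intro μ
  induction μ with
  | zero =>
    intro v u P hP U hdisj hUcard _ hμ
    -- measure 0: no unexplored vertices and P has length 0
    have hW : ((P.support.toFinset ∪ U)ᶜ).card = 0 := by omega
    have hlen : P.length = 0 := by omega
    have hcount := card_compl_eq P hP U hdisj
    refine ⟨v, u, P, hP, ?_⟩
    have : Fintype.card V ≤ m := by omega
    push_cast
    omega
  | succ μ ih =>
    intro v u P hP U hdisj hUcard hno hμ
    have hcount := card_compl_eq P hP U hdisj
    by_cases hext : ∃ w : V, w ∉ P.support ∧ w ∉ U ∧ G.Adj w v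
    · -- extend the path at its start
      obtain ⟨w, hwS, hwU, hwv⟩ := hext
      have hP' : (Walk.cons hwv P).IsPath := hP.cons hwS
      have hdisj' : ∀ x ∈ U, x ∉ (Walk.cons hwv P).support := by
        intro x hx
        rw [Walk.support_cons]
        simp only [List.mem_cons]
        push_neg
        exact ⟨fun h => hwU (h ▸ hx), hdisj x hx⟩
      have hno' : ∀ a ∈ U, ∀ b : V, b ∉ (Walk.cons hwv P).support → b ∉ U → ¬ G.Adj a b := by
        intro a ha b hb hbU
        refine hno a ha b ?_ hbU
        intro hbS
        exact hb (by rw [Walk.support_cons]; exact List.mem_cons_of_mem _ hbS)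
      have hcount' := card_compl_eq (Walk.cons hwv P) hP' U hdisj'
      have hlen' : (Walk.cons hwv P).length = P.length + 1 := Walk.length_cons _ _
      refine ih w u (Walk.cons hwv P) hP' U hdisj' hUcard hno' ?_
      omega
    · -- cannot extend: pop the first vertex of P into U
      push_neg at hext
      have hvU : v ∉ U := fun h => hdisj v h P.start_mem_support
      -- key property of U' = insert v U : no edges to the new unexplored set
      cases P with
      | nil =>
        -- P is a single vertex v (= u)
        by_cases hfin : U.card + 1 = m
        · -- terminate: U' = insert v U has size m
          have hU'card : (insert v U).card = m := by
            rw [Finset.card_insert_of_notMem hvU]; exact hfin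
          set Ws : Finset V := (insert v U)ᶜ with hWs
          have hd : Disjoint (insert v U) Ws := disjoint_compl_right
          have hnoW : ∀ a ∈ insert v U, ∀ b ∈ Ws, ¬ G.Adj a b := by
            intro a ha b hb
            have hbU' : b ∉ insert v U := by
              intro h; exact (Finset.mem_compl.mp hb) h
            have hbv : b ≠ v := fun h => hbU' (h ▸ Finset.mem_insert_self v U)
            have hbU : b ∉ U := fun h => hbU' (Finset.mem_insert_of_mem h)
            have hbS : b ∉ (Walk.nil : G.Walk v v).support := by
              simp [hbv]
            rcases Finset.mem_insert.mp ha with rfl | haU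
            · exact fun hadj => hext b hbS hbU hadj.symm
            · exact hno a haU b hbS hbU
          have hWsmall := hG.small_W hm (insert v U) Ws hU'card hd hnoW
          have hWscard : Ws.card + (insert v U).card = Fintype.card V := by
            rw [Finset.card_compl]
            have := Finset.card_le_univ (insert v U)
            omega
          refine ⟨v, v, Walk.nil, Walk.IsPath.nil, ?_⟩
          have : Fintype.card V ≤ 2 * m - 1 := by omega
          push_cast
          omega
        · -- restart from a fresh vertex, if any
          by_cases hWe : ((Walk.nil : G.Walk v v).support.toFinset ∪ U)ᶜ = ∅
          · -- no unexplored vertices: whole graph is {v} ∪ U, small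
            have hW0 : (((Walk.nil : G.Walk v v).support.toFinset ∪ U)ᶜ).card = 0 := by
              rw [hWe]; rfl
            refine ⟨v, v, Walk.nil, Walk.IsPath.nil, ?_⟩
            have : Fintype.card V ≤ m := by
              have h2 := hcount
              simp only [Walk.length_nil] at h2
              omega
            push_cast
            omega
          · obtain ⟨w, hw⟩ := Finset.nonempty_iff_ne_empty.mpr hWe
            rw [Finset.mem_compl, Finset.mem_union] at hw
            push_neg at hw
            obtain ⟨hwS, hwU⟩ := hw
            have hwv : w ≠ v := by
              intro h
              apply hwS
              rw [h]
              simp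
            set U' : Finset V := insert v U with hU'
            have hU'card : U'.card = U.card + 1 := Finset.card_insert_of_notMem hvU
            have hdisj' : ∀ x ∈ U', x ∉ (Walk.nil : G.Walk w w).support := by
              intro x hx
              simp only [Walk.support_nil, List.mem_singleton]
              rcases Finset.mem_insert.mp hx with rfl | hxU
              · exact fun h => hwv h.symm
              · intro h
                exact hwU (h ▸ hxU)
            have hno' : ∀ a ∈ U', ∀ b : V, b ∉ (Walk.nil : G.Walk w w).support → b ∉ U' →
                ¬ G.Adj a b := by
              intro a ha b hbS hbU'
              have hbv : b ≠ v := fun h => hbU' (h ▸ Finset.mem_insert_self v U)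
              have hbU : b ∉ U := fun h => hbU' (Finset.mem_insert_of_mem h)
              have hbSv : b ∉ (Walk.nil : G.Walk v v).support := by simp [hbv]
              rcases Finset.mem_insert.mp ha with rfl | haU
              · exact fun hadj => hext b hbSv hbU hadj.symm
              · exact hno a haU b hbSv hbU
            -- cardinality of new unexplored set
            have hc' := card_compl_eq (Walk.nil : G.Walk w w) Walk.IsPath.nil U' hdisj'
            refine ih w w Walk.nil Walk.IsPath.nil U' hdisj' (by omega) hno' ?_
            simp only [Walk.length_nil] at hc' hcount ⊢
            omega
      | @cons _ v' _ hadj Q =>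
        -- P = cons hadj Q with hadj : G.Adj v v', Q : G.Walk v' u
        have hQP : Q.IsPath := hP.of_cons
        have hvQ : v ∉ Q.support := fun h => (Walk.cons_isPath_iff hadj Q).mp hP |>.2 h
        set U' : Finset V := insert v U with hU'
        have hU'card : U'.card = U.card + 1 := Finset.card_insert_of_notMem hvU
        have hdisj' : ∀ x ∈ U', x ∉ Q.support := by
          intro x hx
          rcases Finset.mem_insert.mp hx with rfl | hxU
          · exact hvQ
          · intro h
            exact hdisj x hxU (by rw [Walk.support_cons]; exact List.mem_cons_of_mem _ h)
        have hno' : ∀ a ∈ U', ∀ b : V, b ∉ Q.support → b ∉ U' → ¬ G.Adj a b := by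
          intro a ha b hbS hbU'
          have hbv : b ≠ v := fun h => hbU' (h ▸ Finset.mem_insert_self v U)
          have hbU : b ∉ U := fun h => hbU' (Finset.mem_insert_of_mem h)
          have hbSP : b ∉ (Walk.cons hadj Q).support := by
            rw [Walk.support_cons]
            simp only [List.mem_cons]
            push_neg
            exact ⟨hbv, hbS⟩
          rcases Finset.mem_insert.mp ha with rfl | haU
          · exact fun h => hext b hbSP hbU h.symm
          · exact hno a haU b hbSP hbU
        have hc' := card_compl_eq Q hQP U' hdisj'
        have hlenP : (Walk.cons hadj Q).length = Q.length + 1 := Walk.length_cons _ _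
        by_cases hfin : U.card + 1 = m
        · -- terminate: output Q
          have hU'm : U'.card = m := by omega
          set Ws : Finset V := (Q.support.toFinset ∪ U')ᶜ with hWs
          have hd : Disjoint U' Ws := by
            rw [Finset.disjoint_right]
            intro x hx hxU'
            rw [Finset.mem_compl, Finset.mem_union] at hx
            push_neg at hx
            exact hx.2 hxU'
          have hnoW : ∀ a ∈ U', ∀ b ∈ Ws, ¬ G.Adj a b := by
            intro a ha b hb
            rw [Finset.mem_compl, Finset.mem_union] at hb
            push_neg at hb
            exact hno' a ha b (fun h => hb.1 (List.mem_toFinset.mpr h)) hb.2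
          have hWsmall := hG.small_W hm U' Ws hU'm hd hnoW
          refine ⟨v', u, Q, hQP, ?_⟩
          push_cast
          omega
        · refine ih v' u Q hQP U' hdisj' (by omega) hno' ?_
          omega

end Aux

/-- Lemma 3.8: every `m`-joined graph contains a path of length at least
`|G| − 2m`. -/
theorem joined_long_path (m : ℕ) (V : Type) [Fintype V] [Nonempty V]
    (G : SimpleGraph V) (hG : IsJoined G m) :
    ∃ (u v : V) (P : G.Walk u v), P.IsPath ∧
      (Fintype.card V : ℤ) - 2 * (m : ℤ) ≤ (P.length : ℤ) := by
  classical
  rcases Nat.eq_zero_or_pos m with rfl | hm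
  · obtain ⟨a, ha, -⟩ := hG ∅ ∅ disjoint_bot_left rfl rfl
    exact absurd ha (Finset.notMem_empty a)
  · obtain ⟨v⟩ := ‹Nonempty V›
    refine key hG hm (2 * Fintype.card V) v v Walk.nil Walk.IsPath.nil ∅
      (by simp) (by simpa using hm) (by simp) ?_
    have h := Finset.card_le_univ (((Walk.nil : G.Walk v v).support.toFinset ∪ ∅)ᶜ)
    simp only [Walk.length_nil]
    omega
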